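/- arXiv:2505.04549 — 2 statements merged into one kernel-verified Lean document; each statement's English description precedes it below -/
import Mathlib

section
/- Let A = (Q, E, s, F) be a Wheeler GNFA, let ≤ be a Wheeler order on A, and let α ∈ Σ*. Then G_⊣(α) = Q[|G^≺(α)| + 1, |G^≺_⊣(α)|]. -/
/-- Strict co-lexicographic order: `α ≺ β` iff `α.reverse` is lexicographically
smaller than `β.reverse`. The empty string is the minimum. -/
def ColexLt {σ : Type*} [LinearOrder σ] (α β : List σ) : Prop :=
  List.Lex (· < ·) α.reverse β.reverse

/-- Non-strict co-lexicographic order `α ≼ β`. -/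
def ColexLe {σ : Type*} [LinearOrder σ] (α β : List σ) : Prop :=
  ColexLt α β ∨ α = β

/-- `α` is a strict suffix of `β`. -/
def IsStrictSuffix {σ : Type*} (α β : List σ) : Prop :=
  α <:+ β ∧ α ≠ β

/-- `p(α, k)`: the prefix of `α` of length `k`. -/
def pref {σ : Type*} (α : List σ) (k : ℕ) : List σ := α.take k

/-- `s(α, k)`: the suffix of `α` of length `k`. -/
def suff {σ : Type*} (α : List σ) (k : ℕ) : List σ := α.drop (α.length - k)

/-- The 1-based rank of a state in a finite linear order: `rankQ u = i` means
`u = Q[i]` in the enumeration `Q[1] < Q[2] < ⋯ < Q[|Q|]`. -/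
noncomputable def rankQ {Q : Type*} [Fintype Q] [LinearOrder Q] (u : Q) : ℕ :=
  {v : Q | v ≤ u}.ncard

/-- `Q[i, j] = {Q[i], …, Q[j]}` (empty if `i > j`). -/
def Qiv (Q : Type*) [Fintype Q] [LinearOrder Q] (i j : ℕ) : Set Q :=
  {u | i ≤ rankQ u ∧ rankQ u ≤ j}

/-- A generalized nondeterministic finite automaton: a finite set of
string-labeled edges `E ⊆ Q × Q × Σ*`, an initial state `s`, final states `F`. -/
structure GNFA (σ Q : Type*) where
  E : Finset (Q × Q × List σ)
  s : Q
  F : Finset Q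

namespace GNFA

variable {σ Q : Type*}

/-- `I A u β` means `β ∈ I_u`: `β` is obtained by concatenating the edge labels
along some path from `s` to `u` (in particular `ε ∈ I_s`). -/
inductive I (A : GNFA σ Q) : Q → List σ → Prop
  | base : I A A.s []
  | step {u v : Q} {α ρ : List σ} : I A u α → (u, v, ρ) ∈ A.E → I A v (α ++ ρ)

/-- Reachability along edges. -/
def Reach (A : GNFA σ Q) : Q → Q → Prop :=
  Relation.ReflTransGen (fun x y => ∃ ρ, (x, y, ρ) ∈ A.E)

/-- Every state is reachable from the initial state and is co-reachable
(final or allows reaching a final state). -/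
def Standard (A : GNFA σ Q) : Prop :=
  (∀ u, A.Reach A.s u) ∧ ∀ u, ∃ f ∈ A.F, A.Reach u f

/-- An ε-walk from `u` to `v`: a (possibly empty) sequence of ε-labeled edges. -/
def EpsWalk (A : GNFA σ Q) : Q → Q → Prop :=
  Relation.ReflTransGen (fun x y => (x, y, ([] : List σ)) ∈ A.E)

/-- An `r`-GNFA: all edge labels have length at most `r`. -/
def Bounded (A : GNFA σ Q) (r : ℕ) : Prop := ∀ e ∈ A.E, e.2.2.length ≤ r

/-- A GNFA without ε-transitions: every edge label is nonempty. -/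
def NoEps (A : GNFA σ Q) : Prop := ∀ e ∈ A.E, e.2.2 ≠ []

/-- `λ(u)`: the set of strings labeling some edge entering `u`. -/
def lab (A : GNFA σ Q) (u : Q) : Set (List σ) := {ρ | ∃ u', (u', u, ρ) ∈ A.E}

/-- `G_⊣(α)`: states `u` such that some `β ∈ I_u` has `α` as a suffix. -/
def Gsuf (A : GNFA σ Q) (α : List σ) : Set Q := {u | ∃ β, I A u β ∧ α <:+ β}

/-- `G*(α)`: states reached by an edge whose label has `α` as a suffix. -/
def Gstar (A : GNFA σ Q) (α : List σ) : Set Q := {u | ∃ ρ ∈ A.lab u, α <:+ ρ}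

section Colex
variable [LinearOrder σ]

/-- The preorder `u ≼_A v`. -/
def Preceq (A : GNFA σ Q) (u v : Q) : Prop :=
  ∀ α β, I A u α → I A v β →
    ¬((I A u α ∧ I A v α) ∧ (I A u β ∧ I A v β)) → ColexLt α β

/-- `G^≺(α)`: states `u` such that every `β ∈ I_u` satisfies `β ≺ α`. -/
def Gprec (A : GNFA σ Q) (α : List σ) : Set Q := {u | ∀ β, I A u β → ColexLt β α}

/-- `G^≺_⊣(α) = G^≺(α) ∪ G_⊣(α)`. -/
def GprecSuf (A : GNFA σ Q) (α : List σ) : Set Q := A.Gprec α ∪ A.Gsuf α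

/-- The linear order on `Q` is a Wheeler order on `A` (Axioms 1–4). -/
def IsWheeler [LinearOrder Q] (A : GNFA σ Q) : Prop :=
  (∀ u v : Q, u ≤ v → A.Preceq u v) ∧
  (∀ u : Q, A.s ≤ u) ∧
  (∀ u' u v' v : Q, ∀ ρ ρ' : List σ, (u', u, ρ) ∈ A.E → (v', v, ρ') ∈ A.E →
      u < v → ¬IsStrictSuffix ρ' ρ → ColexLe ρ ρ') ∧
  (∀ u' u v' v : Q, ∀ ρ : List σ, (u', u, ρ) ∈ A.E → (v', v, ρ) ∈ A.E →
      u < v → u' ≤ v')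

end Colex

section Indexed
variable [Fintype Q] [LinearOrder Q]

/-- `out(Q[1, m], ρ)`: number of edges labeled `ρ` leaving states in `Q[1, m]`. -/
noncomputable def outC (A : GNFA σ Q) (m : ℕ) (ρ : List σ) : ℕ :=
  {e : Q × Q × List σ | e ∈ A.E ∧ rankQ e.1 ≤ m ∧ e.2.2 = ρ}.ncard

/-- `in(Q[1, m], ρ)`: number of edges labeled `ρ` entering states in `Q[1, m]`. -/
noncomputable def inC (A : GNFA σ Q) (m : ℕ) (ρ : List σ) : ℕ :=
  {e : Q × Q × List σ | e ∈ A.E ∧ rankQ e.2.1 ≤ m ∧ e.2.2 = ρ}.ncard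

/-- `A_max[i]`: the largest `j` such that there is an ε-walk from `Q[j]` to `Q[i]`. -/
noncomputable def Amax (A : GNFA σ Q) (i : ℕ) : ℕ :=
  sSup {j | ∃ u v : Q, rankQ u = i ∧ rankQ v = j ∧ A.EpsWalk v u}

/-- `A_min[i]`: the smallest `j` such that there is an ε-walk from `Q[j]` to `Q[i]`. -/
noncomputable def Amin (A : GNFA σ Q) (i : ℕ) : ℕ :=
  sInf {j | ∃ u v : Q, rankQ u = i ∧ rankQ v = j ∧ A.EpsWalk v u}

variable [LinearOrder σ]

/-- `f_k = out(Q[1, |G^≺(p(α, |α|−k))|], s(α, k))`. -/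
noncomputable def fk (A : GNFA σ Q) (α : List σ) (k : ℕ) : ℕ :=
  A.outC ((A.Gprec (pref α (α.length - k))).ncard) (suff α k)

/-- `g_k = out(Q[1, |G^≺_⊣(p(α, |α|−k))|], s(α, k))`. -/
noncomputable def gk (A : GNFA σ Q) (α : List σ) (k : ℕ) : ℕ :=
  A.outC ((A.GprecSuf (pref α (α.length - k))).ncard) (suff α k)

/-- The property defining `j*` in Lemmas 2 and 4 (largest `j` satisfying it):
(i) `in(Q[1, j], s(α, k)) ≤ f_k` for every `0 < k < min{r+1, |α|}`; and
(ii) `ρ ≺ α` for every `ρ ∈ Σ^k ∩ λ(Q[h])`, every `1 ≤ h ≤ j`, every `0 < k < r+1`. -/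
def Jcond (A : GNFA σ Q) (r : ℕ) (α : List σ) (j : ℕ) : Prop :=
  (∀ k, 0 < k → k < min (r + 1) α.length → A.inC j (suff α k) ≤ A.fk α k) ∧
  (∀ k, 0 < k → k < r + 1 → ∀ h, 1 ≤ h → h ≤ j → ∀ u : Q, rankQ u = h →
      ∀ ρ : List σ, ρ.length = k → ρ ∈ A.lab u → ColexLt ρ α)

/-- The property defining `i*` (largest `i ≤ |Q|` satisfying it):
if `i ≥ 1` then `Q[i] ∈ G*(α)`. -/
def Icond (A : GNFA σ Q) (α : List σ) (i : ℕ) : Prop :=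
  1 ≤ i → ∃ u : Q, rankQ u = i ∧ u ∈ A.Gstar α

/-- The property defining `j°` (smallest `j ≤ |Q|` satisfying it):
`in(Q[1, j], s(α, k)) ≥ g_k` for every `0 < k < min{r+1, |α|}` with `g_k > f_k`. -/
def Jcond2 (A : GNFA σ Q) (r : ℕ) (α : List σ) (j : ℕ) : Prop :=
  ∀ k, 0 < k → k < min (r + 1) α.length → A.fk α k < A.gk α k →
    A.gk α k ≤ A.inC j (suff α k)

end Indexed

end GNFA
section Aux
variable {σ : Type*} [LinearOrder σ]

lemma lex_not_append (p : List σ) : ∀ q, ¬ List.Lex (· < ·) (p ++ q) p := by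
  induction p with
  | nil => intro q h; exact List.not_lex_nil h
  | cons a t ih => intro q h; rw [List.cons_append, List.lex_cons_iff] at h; exact ih q h

lemma not_colexLt_of_suffix {a b : List σ} (h : a <:+ b) : ¬ ColexLt b a := by
  obtain ⟨t, rfl⟩ := h
  simpa [ColexLt, List.reverse_append] using lex_not_append a.reverse t.reverse

lemma colexLt_trans {a b c : List σ} (h1 : ColexLt a b) (h2 : ColexLt b c) : ColexLt a c := by
  unfold ColexLt at *
  exact List.lex_trans (fun h1 h2 => lt_trans h1 h2) h1 h2

lemma colexLt_trichotomy (a b : List σ) : ColexLt a b ∨ a = b ∨ ColexLt b a := by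
  rcases trichotomous_of (List.Lex (· < ·)) a.reverse b.reverse with h | h | h
  · exact Or.inl h
  · exact Or.inr (Or.inl (by simpa using congrArg List.reverse h))
  · exact Or.inr (Or.inr h)

lemma lex_prefix_sandwich : ∀ (a b c : List σ), a <+: c → ¬ List.Lex (· < ·) b a →
    List.Lex (· < ·) b c → a <+: b := by
  intro a
  induction a with
  | nil => intro b c _ _ _; exact List.nil_prefix
  | cons x t ih =>
    intro b c hpre hnb hbc
    obtain ⟨r, rfl⟩ := hpre
    match b with
    | [] => exact absurd (List.Lex.nil) hnb
    | y :: tb =>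
      rw [List.cons_append] at hbc
      cases hbc with
      | rel h =>
        -- y < x, so Lex (y::tb) (x::t) would hold
        exact absurd (List.Lex.rel h) hnb
      | cons h =>
        have ht : t <+: tb := by
          refine ih tb (t ++ r) ⟨r, rfl⟩ ?_ h
          intro hl; exact hnb (List.Lex.cons hl)
        exact (List.prefix_cons_inj x).mpr ht

lemma colex_suffix_sandwich {a b c : List σ} (h : a <:+ c) (h1 : ¬ ColexLt b a)
    (h2 : ColexLt b c) : a <:+ b := by
  rw [← List.reverse_prefix] at h ⊢
  exact lex_prefix_sandwich a.reverse b.reverse c.reverse h h1 h2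

end Aux


section MainAux

lemma mem_iff_rank_le {Q : Type*} [Fintype Q] [LinearOrder Q] {S : Set Q}
    (hdc : ∀ {u v : Q}, u ≤ v → v ∈ S → u ∈ S) (u : Q) :
    u ∈ S ↔ rankQ u ≤ S.ncard := by
  constructor
  · intro hu
    exact Set.ncard_le_ncard (fun v hv => hdc hv hu) S.toFinite
  · intro h
    by_contra hu
    have hsub : S ⊆ {v | v < u} := fun v hv =>
      lt_of_not_ge (fun hle => hu (hdc hle hv))
    have h1 : S.ncard ≤ {v : Q | v < u}.ncard :=
      Set.ncard_le_ncard hsub (Set.toFinite _)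
    have h2 : {v : Q | v < u}.ncard < rankQ u := by
      apply Set.ncard_lt_ncard ?_ (Set.toFinite _)
      constructor
      · exact fun v hv => le_of_lt hv
      · intro hsub2
        exact lt_irrefl u (hsub2 (le_refl u))
    unfold rankQ at h h2
    omega

variable {σ Q : Type*} [LinearOrder σ] (A : GNFA σ Q)

lemma I_nonempty (hA : A.Standard) (u : Q) : ∃ β, A.I u β := by
  have h := hA.1 u
  induction h with
  | refl => exact ⟨[], GNFA.I.base⟩
  | tail _ hstep ih =>
    obtain ⟨β, hβ⟩ := ih
    obtain ⟨ρ, hρ⟩ := hstep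
    exact ⟨β ++ ρ, GNFA.I.step hβ hρ⟩

variable [LinearOrder Q]

lemma gprec_dc (hA : A.Standard) (hW : A.IsWheeler) {α : List σ} {u v : Q}
    (huv : u ≤ v) (hv : v ∈ A.Gprec α) : u ∈ A.Gprec α := by
  intro β hβ
  obtain ⟨γ, hγ⟩ := I_nonempty A hA v
  by_cases hvβ : A.I v β
  · exact hv β hvβ
  · have h := hW.1 u v huv β γ hβ hγ (by tauto)
    exact colexLt_trans h (hv γ hγ)

lemma gsuf_disj_gprec {α : List σ} {u : Q} (hu : u ∈ A.Gsuf α) : u ∉ A.Gprec α := by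
  obtain ⟨β, hI, hsuf⟩ := hu
  intro hp
  exact not_colexLt_of_suffix hsuf (hp β hI)

lemma gprecsuf_dc (hA : A.Standard) (hW : A.IsWheeler) {α : List σ} {u v : Q}
    (huv : u ≤ v) (hv : v ∈ A.GprecSuf α) : u ∈ A.GprecSuf α := by
  by_contra hu
  rw [GNFA.GprecSuf, Set.mem_union, not_or] at hu
  obtain ⟨hup, hus⟩ := hu
  obtain ⟨β, hβ, hβα⟩ : ∃ β, A.I u β ∧ ¬ ColexLt β α := by
    by_contra h
    push_neg at h
    exact hup h
  cases hv with
  | inl hv =>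
    obtain ⟨γ, hγ⟩ := I_nonempty A hA v
    by_cases hvβ : A.I v β
    · exact hβα (hv β hvβ)
    · have h := hW.1 u v huv β γ hβ hγ (by tauto)
      exact hβα (colexLt_trans h (hv γ hγ))
  | inr hv =>
    obtain ⟨γ, hγ, hsuf⟩ := hv
    by_cases huγ : A.I u γ
    · exact hus ⟨γ, huγ, hsuf⟩
    · have h := hW.1 u v huv β γ hβ hγ (by tauto)
      exact hus ⟨β, hβ, colex_suffix_sandwich hsuf hβα h⟩

end MainAux

/-- Let `A` be a Wheeler GNFA with Wheeler order `≤` and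
`α ∈ Σ*`. Then `G_⊣(α) = Q[|G^≺(α)| + 1, |G^≺_⊣(α)|]`. -/
theorem gsuf_eq_interval {σ Q : Type*} [Fintype σ] [LinearOrder σ]
    [Fintype Q] [LinearOrder Q] (A : GNFA σ Q)
    (hA : A.Standard) (hW : A.IsWheeler) (α : List σ) :
    A.Gsuf α = Qiv Q ((A.Gprec α).ncard + 1) ((A.GprecSuf α).ncard) := by
  ext u
  have hP := mem_iff_rank_le (S := A.Gprec α) (fun h hv => gprec_dc A hA hW h hv) u
  have hPS := mem_iff_rank_le (S := A.GprecSuf α) (fun h hv => gprecsuf_dc A hA hW h hv) u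
  simp only [Qiv, Set.mem_setOf_eq]
  constructor
  · intro hu
    have h1 : u ∈ A.GprecSuf α := Or.inr hu
    have h2 : u ∉ A.Gprec α := gsuf_disj_gprec A hu
    rw [hPS] at h1
    rw [hP] at h2
    omega
  · rintro ⟨h1, h2⟩
    have hps : u ∈ A.GprecSuf α := hPS.mpr h2
    have hp : u ∉ A.Gprec α := fun h => by rw [hP] at h; omega
    cases hps with
    | inl h => exact absurd h hp
    | inr h => exact h
end

section
/- Let A = (Q, E, s, F) be a Wheeler r-GNFA, let ≤ be a Wheeler order on A, and let α ∈ Σ* with α ≠ ε. Let h* be defined as in the context. Then h* ≥ |G^≺(α)|, and if h* = |G^≺(α)|, then G_⊣(α) = ∅ and |G^≺_⊣(α)| = h* = |G^≺(α)|. -/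
section StatementNineAux

open List

variable {σ' : Type*} [LinearOrder σ']

lemma not_lex_append : ∀ (l d : List σ'), ¬ List.Lex (· < ·) (l ++ d) l
  | [], _ => List.not_lex_nil
  | x :: l, d => by
      intro h
      cases h with
      | cons h => exact not_lex_append l d h
      | rel h => exact lt_irrefl _ h

lemma lex_of_append_lex : ∀ (l a b : List σ'),
    List.Lex (· < ·) (l ++ a) (l ++ b) → List.Lex (· < ·) a b
  | [], _, _, h => h
  | x :: l, a, b, h => by
      cases h with
      | cons h => exact lex_of_append_lex l a b h
      | rel h => exact absurd h (lt_irrefl _)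

lemma lex_trim : ∀ (a g d : List σ'), ¬ g <+: a → List.Lex (· < ·) a (g ++ d) →
    List.Lex (· < ·) a g
  | _, [], _, hp, _ => absurd List.nil_prefix hp
  | [], y :: g', _, _, _ => List.Lex.nil
  | x :: a', y :: g', d, hp, h => by
      cases h with
      | rel h => exact List.Lex.rel h
      | cons h =>
          exact List.Lex.cons (lex_trim a' g' d
            (fun hpre => hp (List.cons_prefix_cons.mpr ⟨rfl, hpre⟩)) h)

lemma colex_suffix_not_lt {α β : List σ'} (h : α <:+ β) : ¬ ColexLt β α := by
  obtain ⟨δ, rfl⟩ := h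
  simpa [ColexLt, List.reverse_append] using not_lex_append α.reverse δ.reverse

lemma colex_trim {β γ δ : List σ'} (h1 : ¬ γ <:+ β) (h2 : ColexLt β (δ ++ γ)) :
    ColexLt β γ := by
  have h1' : ¬ γ.reverse <+: β.reverse := fun hp => h1 (by
    simpa using List.reverse_prefix.mp hp)
  exact lex_trim _ _ _ h1' (by simpa [ColexLt, List.reverse_append] using h2)

lemma colex_append_cancel {a b c : List σ'} (h : ColexLt (a ++ c) (b ++ c)) :
    ColexLt a b :=
  lex_of_append_lex c.reverse _ _ (by simpa [ColexLt, List.reverse_append] using h)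

lemma colex_trans {a b c : List σ'} (h1 : ColexLt a b) (h2 : ColexLt b c) :
    ColexLt a c := by
  have h1' : List.Lex (· < ·) a.reverse b.reverse := h1
  have h2' : List.Lex (· < ·) b.reverse c.reverse := h2
  show List.Lex (· < ·) a.reverse c.reverse
  exact List.lex_trans lt_trans h1' h2'

variable {σ Q : Type*} [LinearOrder σ]

lemma exists_I_of_reach {A : GNFA σ Q} {u v : Q} (h : A.Reach u v) {γ : List σ}
    (hg : A.I u γ) : ∃ δ, A.I v δ := by
  induction h with
  | refl => exact ⟨γ, hg⟩
  | tail _ e ih =>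
      obtain ⟨δ, hδ⟩ := ih
      obtain ⟨ρ, hρ⟩ := e
      exact ⟨δ ++ ρ, hδ.step hρ⟩

lemma I_nonempty_s9 {A : GNFA σ Q} (hA : A.Standard) (v : Q) : ∃ δ, A.I v δ :=
  exists_I_of_reach (hA.1 v) GNFA.I.base

variable [LinearOrder Q]

lemma gprec_down {A : GNFA σ Q} (hA : A.Standard) (hW : A.IsWheeler)
    {α : List σ} {u v : Q} (huv : u ≤ v) (hv : v ∈ A.Gprec α) : u ∈ A.Gprec α := by
  intro β hβ
  by_cases hb : A.I v β
  · exact hv β hb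
  · obtain ⟨γ, hγ⟩ := I_nonempty_s9 hA v
    exact colex_trans (hW.1 u v huv β γ hβ hγ (fun hc => hb hc.1.2)) (hv γ hγ)

lemma gprecSuf_down {A : GNFA σ Q} (hA : A.Standard) (hW : A.IsWheeler)
    {α : List σ} {u v : Q} (huv : u ≤ v) (hv : v ∈ A.GprecSuf α) :
    u ∈ A.GprecSuf α := by
  rcases hv with hv | hv
  · exact Or.inl (gprec_down hA hW huv hv)
  · by_cases hu : u ∈ A.Gsuf α
    · exact Or.inr hu
    · left
      intro β hβ
      obtain ⟨β', hβ', hsuf⟩ := hv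
      have hlt : ColexLt β β' :=
        hW.1 u v huv β β' hβ hβ' (fun hc => hu ⟨β', hc.2.1, hsuf⟩)
      obtain ⟨δ, rfl⟩ := hsuf
      exact colex_trim (fun hs => hu ⟨β, hβ, hs⟩) hlt

lemma gsuf_not_gprec {A : GNFA σ Q} {α : List σ} {v : Q} (hv : v ∈ A.Gsuf α) :
    v ∉ A.Gprec α := by
  obtain ⟨β, hβ, hs⟩ := hv
  exact fun hp => colex_suffix_not_lt hs (hp β hβ)

section Rank

variable [Fintype Q]

lemma rank_le_ncard_of_mem {S : Set Q}
    (hS : ∀ ⦃u v : Q⦄, u ≤ v → v ∈ S → u ∈ S) {v : Q} (hv : v ∈ S) :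
    rankQ v ≤ S.ncard :=
  Set.ncard_le_ncard (fun _ hw => hS hw hv) S.toFinite

lemma ncard_lt_rank_of_not_mem {S : Set Q}
    (hS : ∀ ⦃u v : Q⦄, u ≤ v → v ∈ S → u ∈ S) {v : Q} (hv : v ∉ S) :
    S.ncard < rankQ v := by
  have hsub : insert v S ⊆ {w : Q | w ≤ v} := by
    rintro w (rfl | hw)
    · exact le_refl _
    · rcases le_total w v with h | h
      · exact h
      · exact absurd (hS h hw) hv
  have h1 : (insert v S).ncard = S.ncard + 1 := Set.ncard_insert_of_notMem hv S.toFinite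
  have h2 : (insert v S).ncard ≤ rankQ v := Set.ncard_le_ncard hsub (Set.toFinite _)
  omega

lemma mem_of_rank_le_ncard {S : Set Q}
    (hS : ∀ ⦃u v : Q⦄, u ≤ v → v ∈ S → u ∈ S) {v : Q}
    (hv : rankQ v ≤ S.ncard) : v ∈ S := by
  by_contra h
  exact absurd hv (not_le.mpr (ncard_lt_rank_of_not_mem hS h))

lemma rankQ_le_card (v : Q) : rankQ v ≤ Fintype.card Q := by
  have := Set.ncard_le_ncard (Set.subset_univ {w : Q | w ≤ v}) (Set.toFinite _)
  simpa [rankQ, Set.ncard_univ, Nat.card_eq_fintype_card] using this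

end Rank

lemma path_case (A : GNFA σ Q) (r : ℕ) (hr : A.Bounded r) :
    ∀ {u : Q} {β : List σ}, A.I u β → ∀ α : List σ, α ≠ [] → α <:+ β →
    (∃ v, v ∈ A.Gstar α ∧ v ∈ A.Gsuf α) ∨
    (∃ k, 0 < k ∧ k < α.length ∧ k ≤ r ∧
      ∃ x y, (x, y, suff α k) ∈ A.E ∧ x ∈ A.Gsuf (pref α (α.length - k))) := by
  intro u β h
  induction h with
  | base =>
      intro α hne hsuf
      exact absurd (List.suffix_nil.mp hsuf) hne
  | @step w v γ ρ hI hE ih =>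
      intro α hne hsuf
      by_cases hlen : α.length ≤ ρ.length
      · -- α is a suffix of ρ
        have h1 : α.reverse <+: ρ.reverse := by
          have h2 : α.reverse <+: (γ ++ ρ).reverse := List.reverse_prefix.mpr hsuf
          have h3 : ρ.reverse <+: (γ ++ ρ).reverse :=
            List.reverse_prefix.mpr (List.suffix_append γ ρ)
          exact List.prefix_of_prefix_length_le h2 h3 (by simpa using hlen)
        have hαρ : α <:+ ρ := by
          have := List.reverse_prefix.mp (by simpa using h1)
          simpa using this
        exact Or.inl ⟨v, ⟨ρ, ⟨w, hE⟩, hαρ⟩, ⟨γ ++ ρ, hI.step hE, hsuf⟩⟩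
      · push_neg at hlen
        obtain ⟨δ, hδ⟩ := hsuf
        by_cases hρ : ρ = []
        · subst hρ
          exact ih α hne ⟨δ, by simpa using hδ⟩
        · right
          set k := ρ.length with hk
          set m := α.length - k with hm
          have hkpos : 0 < k := List.length_pos_iff.mpr hρ
          have hkα : k < α.length := hlen
          have hsplit : (δ ++ α.take m) ++ α.drop m = γ ++ ρ := by
            rw [List.append_assoc, List.take_append_drop]; exact hδ
          have hdroplen : (α.drop m).length = ρ.length := by
            simp [hm]; omega
          obtain ⟨heq1, heq2⟩ := List.append_inj' hsplit hdroplen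
          refine ⟨k, hkpos, hkα, hr _ hE, w, v, ?_, ?_⟩
          · have : suff α k = ρ := by rw [suff, ← hm, heq2]
            rw [this]; exact hE
          · exact ⟨γ, hI, ⟨δ, by rw [pref, ← hm, heq1]⟩⟩

end StatementNineAux

/-- Let `A` be a Wheeler `r`-GNFA with Wheeler order `≤` and
`α ≠ ε`. Let `i*` be the largest `0 ≤ i ≤ |Q|` with (`i ≥ 1 →` `Q[i] ∈ G*(α)`),
`j°` the smallest `0 ≤ j ≤ |Q|` with `in(Q[1,j], s(α,k)) ≥ g_k` for every
`0 < k < min{r+1,|α|}` with `g_k > f_k`, and `h* = max{|G^≺(α)|, i*, j°}`.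
Then `h* ≥ |G^≺(α)|`, and if `h* = |G^≺(α)|`, then `G_⊣(α) = ∅` and
`|G^≺_⊣(α)| = h* = |G^≺(α)|`. -/
theorem hstar_eq_gprec_case {σ Q : Type*} [Fintype σ] [LinearOrder σ]
    [Fintype Q] [LinearOrder Q] (A : GNFA σ Q)
    (hA : A.Standard) (hW : A.IsWheeler) (r : ℕ) (hr : A.Bounded r)
    (α : List σ) (hα : α ≠ [])
    (istar : ℕ) (hi_le : istar ≤ Fintype.card Q) (hi : A.Icond α istar)
    (hi_max : ∀ i ≤ Fintype.card Q, A.Icond α i → i ≤ istar)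
    (jo : ℕ) (hjo_le : jo ≤ Fintype.card Q) (hjo : A.Jcond2 r α jo)
    (hjo_min : ∀ j ≤ Fintype.card Q, A.Jcond2 r α j → jo ≤ j)
    (hstar : ℕ) (hh : hstar = max (max (A.Gprec α).ncard istar) jo) :
    (A.Gprec α).ncard ≤ hstar ∧
    (hstar = (A.Gprec α).ncard →
      A.Gsuf α = ∅ ∧ (A.GprecSuf α).ncard = hstar ∧
      (A.GprecSuf α).ncard = (A.Gprec α).ncard) := by
  constructor
  · rw [hh]; exact le_trans (le_max_left _ _) (le_max_left _ _)
  · intro heq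
    have hmax : max (max (A.Gprec α).ncard istar) jo = (A.Gprec α).ncard := by
      rw [← hh, heq]
    have histar : istar ≤ (A.Gprec α).ncard := by
      have h1 := le_max_right (A.Gprec α).ncard istar
      have h2 := le_max_left (max (A.Gprec α).ncard istar) jo
      omega
    have hjole : jo ≤ (A.Gprec α).ncard := by
      have h1 := le_max_right (max (A.Gprec α).ncard istar) jo
      omega
    have hdp : ∀ {γ : List σ} ⦃u v : Q⦄, u ≤ v → v ∈ A.Gprec γ → u ∈ A.Gprec γ :=
      fun h hm => gprec_down hA hW h hm
    have hGsuf : A.Gsuf α = ∅ := by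
      rw [Set.eq_empty_iff_forall_notMem]
      intro u0 hu0
      obtain ⟨β, hβI, hβs⟩ := hu0
      rcases path_case A r hr hβI α hα hβs with ⟨v, hvstar, hvsuf⟩ |
        ⟨k, hk0, hkα, hkr, x, y, hedge, hxsuf⟩
      · have hIc : A.Icond α (rankQ v) := fun _ => ⟨v, rfl, hvstar⟩
        have h1 : rankQ v ≤ istar := hi_max _ (rankQ_le_card v) hIc
        have h2 : (A.Gprec α).ncard < rankQ v :=
          ncard_lt_rank_of_not_mem hdp (gsuf_not_gprec hvsuf)
        omega
      · set p := pref α (α.length - k) with hp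
        set ρ := suff α k with hρdef
        have hxnp : x ∉ A.Gprec p := gsuf_not_gprec hxsuf
        have hrx1 : rankQ x ≤ (A.GprecSuf p).ncard :=
          rank_le_ncard_of_mem (fun _ _ h hm => gprecSuf_down hA hW h hm) (Or.inr hxsuf)
        have hrx2 : (A.Gprec p).ncard < rankQ x := ncard_lt_rank_of_not_mem hdp hxnp
        have hfg : A.fk α k < A.gk α k := by
          have hfsub : {e : Q × Q × List σ | e ∈ A.E ∧ rankQ e.1 ≤ (A.Gprec p).ncard ∧ e.2.2 = ρ}
              ⊆ {e : Q × Q × List σ | e ∈ A.E ∧ rankQ e.1 ≤ (A.GprecSuf p).ncard ∧ e.2.2 = ρ} := by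
            intro e he
            exact ⟨he.1, le_trans he.2.1
              (Set.ncard_le_ncard (fun z hz => Or.inl hz) (Set.toFinite _)), he.2.2⟩
          have hmem : ((x, y, ρ) : Q × Q × List σ) ∈
              {e : Q × Q × List σ | e ∈ A.E ∧ rankQ e.1 ≤ (A.GprecSuf p).ncard ∧ e.2.2 = ρ} :=
            ⟨hedge, hrx1, rfl⟩
          have hnmem : ((x, y, ρ) : Q × Q × List σ) ∉
              {e : Q × Q × List σ | e ∈ A.E ∧ rankQ e.1 ≤ (A.Gprec p).ncard ∧ e.2.2 = ρ} :=
            fun hc => absurd hc.2.1 (not_le.mpr hrx2)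
          have hss := (Set.ssubset_iff_of_subset hfsub).mpr ⟨_, hmem, hnmem⟩
          exact Set.ncard_lt_ncard hss (Set.Finite.subset A.E.finite_toSet (fun e he => he.1))
        have hkmin : k < min (r + 1) α.length := lt_min (by omega) hkα
        have hgle : A.gk α k ≤ A.inC jo ρ := hjo k hk0 hkmin hfg
        have hsub2 : {e : Q × Q × List σ | e ∈ A.E ∧ rankQ e.2.1 ≤ jo ∧ e.2.2 = ρ}
            ⊆ {e : Q × Q × List σ | e ∈ A.E ∧ rankQ e.1 ≤ (A.Gprec p).ncard ∧ e.2.2 = ρ} := by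
          rintro ⟨a, b, ρ'⟩ ⟨hin, hrank, hlab⟩
          simp only [Set.mem_setOf_eq] at *
          refine ⟨hin, ?_, hlab⟩
          subst hlab
          have hb : b ∈ A.Gprec α := mem_of_rank_le_ncard hdp (le_trans hrank hjole)
          have ha : a ∈ A.Gprec p := by
            intro γ hγ
            have hlt : ColexLt (γ ++ ρ) α := hb _ (hγ.step hin)
            have hαeq : p ++ ρ = α := List.take_append_drop _ _
            rw [← hαeq] at hlt
            exact colex_append_cancel hlt
          exact rank_le_ncard_of_mem hdp ha
        have hle : A.inC jo ρ ≤ A.fk α k :=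
          Set.ncard_le_ncard hsub2 (Set.Finite.subset A.E.finite_toSet (fun e he => he.1))
        omega
    have hGPS : A.GprecSuf α = A.Gprec α := by
      rw [GNFA.GprecSuf, hGsuf, Set.union_empty]
    exact ⟨hGsuf, by rw [hGPS, heq], by rw [hGPS]⟩
end
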